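/- Let η_x > 0 and η_λ > 0 be step sizes and for each k ∈ K let w_k > 0. Suppose (x, λ) ∈ X × ℝ^K with λ_k ≥ 0 for all k is a fixed point of the modified Arrow–Hurwicz updates of Algorithm 1: x = x − η_x·(2(x − x⁰) + Σ_{k∈K} λ_k ∇f_k(x)) and λ_k = max(λ_k + η_λ·(f_k(x) − (1/2)·w_k·λ_k), 0) for each k ∈ K. Define c_k = −(1/2)·w_k·λ_k. Then: (i) x is feasible for c, i.e., f_k(x) ≤ −c_k for all k; (ii) stationarity holds: 2(x − x⁰) + Σ_{k∈K} λ_k ∇f_k(x) = 0; (iii) complementary slackness holds: λ_k·(f_k(x) + c_k) = 0 for all k; and (iv) λ_k = −2c_k/w_k for all k, i.e., the counterfactual condition c = −(1/2)Wλ of Theorem 2 is satisfied. -/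

import Mathlib

/-- Fixed points of the modified Arrow–Hurwicz iteration of Algorithm 1 are KKT points
of problem (PI) whose multipliers satisfy the counterfactual condition
`c = -(1/2) W λ` of Theorem 2. -/
theorem modified_arrow_hurwicz_fixed_point
    {X : Type*} [NormedAddCommGroup X] [InnerProductSpace ℝ X] [FiniteDimensional ℝ X]
    {K : Type*} [Fintype K]
    (x0 : X) (w : K → ℝ) (hw : ∀ k, 0 < w k)
    (f : K → X → ℝ) (g : K → X → X)
    (hf_nonneg : ∀ k y, 0 ≤ f k y)
    (hgrad : ∀ k y, HasGradientAt (f k) (g k y) y)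
    (etaX etaL : ℝ) (hetaX : 0 < etaX) (hetaL : 0 < etaL)
    (x : X) (lam : K → ℝ) (hlam : ∀ k, 0 ≤ lam k)
    (hfixX : x = x - etaX • ((2 : ℝ) • (x - x0) + ∑ k, lam k • g k x))
    (hfixL : ∀ k, lam k = max (lam k + etaL * (f k x - (1 / 2) * w k * lam k)) 0) :
    (∀ k, f k x ≤ -(-(1 / 2) * w k * lam k)) ∧
    (2 : ℝ) • (x - x0) + ∑ k, lam k • g k x = 0 ∧
    (∀ k, lam k * (f k x + -(1 / 2) * w k * lam k) = 0) ∧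
    (∀ k, lam k = -2 * (-(1 / 2) * w k * lam k) / w k) := by
  -- key dichotomy for each k
  have key : ∀ k, (lam k = 0 ∧ f k x = 0) ∨ f k x = (1 / 2) * w k * lam k := by
    intro k
    rcases eq_or_lt_of_le (hlam k) with h0 | hpos
    · left
      refine ⟨h0.symm, ?_⟩
      have h := hfixL k
      rw [← h0] at h
      simp only [mul_zero, sub_zero, zero_add] at h
      have hle : etaL * f k x ≤ 0 := by
        by_contra hc
        push_neg at hc
        have : (0:ℝ) < max (etaL * f k x) 0 := lt_max_of_lt_left hc
        linarith
      have hfle : f k x ≤ 0 := by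
        by_contra hc
        push_neg at hc
        nlinarith
      linarith [hf_nonneg k x]
    · right
      have h := hfixL k
      have hmax : lam k = lam k + etaL * (f k x - 1 / 2 * w k * lam k) := by
        rcases max_cases (lam k + etaL * (f k x - 1 / 2 * w k * lam k)) 0 with ⟨he, _⟩ | ⟨he, _⟩
        · rw [he] at h; exact h
        · rw [he] at h; linarith
      have : etaL * (f k x - 1 / 2 * w k * lam k) = 0 := by linarith
      have h2 : f k x - 1 / 2 * w k * lam k = 0 := by
        rcases mul_eq_zero.mp this with h' | h'
        · exact absurd h' (ne_of_gt hetaL)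
        · exact h'
      linarith
  refine ⟨?_, ?_, ?_, ?_⟩
  · intro k
    rcases key k with ⟨h1, h2⟩ | h
    · simp [h1, h2]
    · rw [h]; ring_nf; nlinarith [hw k, hlam k]
  · have h := hfixX
    have h2 : etaX • ((2 : ℝ) • (x - x0) + ∑ k, lam k • g k x) = 0 := by
      have := sub_eq_self.mp h.symm
      exact this
    rcases smul_eq_zero.mp h2 with h' | h'
    · exact absurd h' (ne_of_gt hetaX)
    · exact h'
  · intro k
    rcases key k with ⟨h1, _⟩ | h
    · simp [h1]
    · rw [h]; ring
  · intro k
    field_simp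
    rw [mul_comm, mul_div_assoc, mul_div_cancel₀ _ (ne_of_gt (hw k))]
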